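/- For every Orlicz function Φ, the upper index admits the following characterization: q_Φ = inf{ q > 0 : there exists C > 0 such that ∫_t^∞ s^{−q} Φ(s) ds/s ≤ C t^{−q} Φ(t) for all t > 0 }, with the convention inf ∅ = ∞. -/

import Mathlib

open MeasureTheory Filter Set
open scoped ENNReal Topology

/-- An Orlicz function: continuous, nondecreasing and convex on `[0,∞)`,
vanishing at `0` and tending to `∞` at `∞`. -/
structure IsOrliczFunction (Φ : ℝ → ℝ) : Prop where
  continuousOn : ContinuousOn Φ (Set.Ici 0)
  monotoneOn : MonotoneOn Φ (Set.Ici 0)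
  convexOn : ConvexOn ℝ (Set.Ici 0) Φ
  map_zero : Φ 0 = 0
  tendsto_atTop : Tendsto Φ atTop atTop

/-- `M(t, Φ) = sup {Φ(ts)/Φ(s) : s > 0, Φ(s) > 0}`, as a value in `(0, ∞]`. -/
noncomputable def orliczM (Φ : ℝ → ℝ) (t : ℝ) : ℝ≥0∞ :=
  ⨆ s ∈ {s : ℝ | 0 < s ∧ 0 < Φ s}, ENNReal.ofReal (Φ (t * s) / Φ s)

/-- The quantity `log M(t, Φ) / log t`, as an extended real number.
The index `p_Φ` is its limit as `t → 0⁺`, and `q_Φ` is its limit as `t → ∞`. -/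
noncomputable def orliczLogRatio (Φ : ℝ → ℝ) (t : ℝ) : EReal :=
  ENNReal.log (orliczM Φ t) * ((Real.log t)⁻¹ : ℝ)

namespace OrliczAux

variable {Φ : ℝ → ℝ}

lemma phi_nonneg (hΦ : IsOrliczFunction Φ) {s : ℝ} (hs : 0 ≤ s) : 0 ≤ Φ s := by
  have := hΦ.monotoneOn (self_mem_Ici) (mem_Ici.2 hs) hs
  simpa [hΦ.map_zero] using this

lemma exists_adm (hΦ : IsOrliczFunction Φ) : ∃ s : ℝ, 0 < s ∧ 0 < Φ s := by
  obtain ⟨s, h1, h2⟩ := ((hΦ.tendsto_atTop.eventually_gt_atTop 0).and (eventually_gt_atTop 0)).exists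
  exact ⟨s, h2, h1⟩

lemma superhomog (hΦ : IsOrliczFunction Φ) {u s : ℝ} (hu : 1 ≤ u) (hs : 0 ≤ s) :
    u * Φ s ≤ Φ (u * s) := by
  have hu0 : 0 < u := lt_of_lt_of_le one_pos hu
  have ha : (0:ℝ) ≤ 1/u := by positivity
  have hb : (0:ℝ) ≤ 1 - 1/u := by
    rw [sub_nonneg]
    exact div_le_one_of_le₀ hu hu0.le
  have hab : 1/u + (1 - 1/u) = (1:ℝ) := by ring
  have h := hΦ.convexOn.2 (mem_Ici.2 (mul_nonneg hu0.le hs)) (self_mem_Ici (a := (0:ℝ))) ha hb hab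
  simp only [smul_eq_mul, mul_zero, add_zero, hΦ.map_zero] at h
  have h2 : Φ (1/u * (u*s)) = Φ s := by
    congr 1; field_simp
  rw [h2] at h
  calc u * Φ s ≤ u * (1/u * Φ (u*s)) := by
        exact mul_le_mul_of_nonneg_left h hu0.le
    _ = Φ (u*s) := by field_simp

lemma M_ge (hΦ : IsOrliczFunction Φ) {u : ℝ} (hu : 1 ≤ u) :
    ENNReal.ofReal u ≤ orliczM Φ u := by
  obtain ⟨s, hs, hΦs⟩ := exists_adm hΦ
  refine le_trans (ENNReal.ofReal_le_ofReal ?_) (le_biSup (fun s => ENNReal.ofReal (Φ (u * s) / Φ s)) (show s ∈ {s : ℝ | 0 < s ∧ 0 < Φ s} from ⟨hs, hΦs⟩))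
  rw [le_div_iff₀ hΦs]
  exact superhomog hΦ hu hs.le

lemma M_mono (hΦ : IsOrliczFunction Φ) {t₁ t₂ : ℝ} (h0 : 0 ≤ t₁) (h : t₁ ≤ t₂) :
    orliczM Φ t₁ ≤ orliczM Φ t₂ := by
  refine iSup₂_le fun s hs =>
    le_trans (ENNReal.ofReal_le_ofReal ?_)
      (le_biSup (fun s => ENNReal.ofReal (Φ (t₂ * s) / Φ s)) hs)
  obtain ⟨hs0, hΦs⟩ := hs
  gcongr
  exact hΦ.monotoneOn (mem_Ici.2 (mul_nonneg h0 hs0.le))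
    (mem_Ici.2 (mul_nonneg (h0.trans h) hs0.le)) (mul_le_mul_of_nonneg_right h hs0.le)

lemma logRatio_eq (Φ : ℝ → ℝ) (t : ℝ) :
    orliczLogRatio Φ t = ENNReal.log (orliczM Φ t) / (Real.log t : EReal) := by
  rw [orliczLogRatio, EReal.coe_inv]
  rfl

lemma one_le_qPhi (hΦ : IsOrliczFunction Φ) {qΦ : EReal}
    (hqΦ : Tendsto (orliczLogRatio Φ) atTop (𝓝 qΦ)) : (1 : EReal) ≤ qΦ := by
  refine ge_of_tendsto hqΦ ?_
  filter_upwards [eventually_gt_atTop 1] with u hu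
  have hlog : 0 < Real.log u := Real.log_pos hu
  rw [logRatio_eq, EReal.le_div_iff_mul_le (by exact_mod_cast hlog) (EReal.coe_ne_top _)]
  rw [one_mul]
  calc ((Real.log u : ℝ) : EReal) = ENNReal.log (ENNReal.ofReal u) :=
        (ENNReal.log_ofReal_of_pos (by linarith)).symm
    _ ≤ _ := ENNReal.log_monotone (M_ge hΦ hu.le)

lemma lint_rpow {a c : ℝ} (ha : 0 < a) (hc : c < -1) :
    ∫⁻ r in Ioi a, ENNReal.ofReal (r ^ c) = ENNReal.ofReal (a ^ (c+1) / (-(c+1))) := by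
  rw [← ofReal_integral_eq_lintegral_ofReal (integrableOn_Ioi_rpow_of_lt hc ha) ?_]
  · rw [integral_Ioi_rpow_of_lt hc ha]
    congr 1
    rw [div_neg, neg_div]
  · filter_upwards [ae_restrict_mem measurableSet_Ioi] with x hx
    exact Real.rpow_nonneg (le_of_lt (ha.trans hx)) _

lemma phi_pos (hΦ : IsOrliczFunction Φ) {u₀ : ℝ} (hu₀ : 1 < u₀)
    (hfin : orliczM Φ u₀ ≠ ⊤) {a : ℝ} (ha : 0 < a) : 0 < Φ a := by
  by_contra hcon
  have hΦa : Φ a = 0 := le_antisymm (not_lt.1 hcon) (phi_nonneg hΦ ha.le)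
  obtain ⟨c, hc1, hc2⟩ :=
    ((hΦ.tendsto_atTop.eventually_gt_atTop 0).and (eventually_gt_atTop a)).exists
  set Z : Set ℝ := Icc 0 c ∩ Φ ⁻¹' {0} with hZ
  have hZc : IsClosed Z :=
    (hΦ.continuousOn.mono (Icc_subset_Ici_self)).preimage_isClosed_of_isClosed
      isClosed_Icc isClosed_singleton
  have hZne : a ∈ Z := ⟨⟨ha.le, hc2.le⟩, hΦa⟩
  have hbdd : BddAbove Z := ⟨c, fun x hx => hx.1.2⟩
  set b := sSup Z with hb
  have hbZ : b ∈ Z := hZc.csSup_mem ⟨a, hZne⟩ hbdd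
  have hb0 : 0 < b := lt_of_lt_of_le ha (le_csSup hbdd hZne)
  have hΦb : Φ b = 0 := hbZ.2
  have hposafter : ∀ x, b < x → 0 < Φ x := by
    intro x hx
    have hx0 : 0 < x := hb0.trans hx
    rcases le_or_gt x c with h | h
    · rcases (phi_nonneg hΦ hx0.le).lt_or_eq with h' | h'
      · exact h'
      · exact absurd (le_csSup hbdd ⟨⟨hx0.le, h⟩, h'.symm⟩) (not_le.2 hx)
    · refine lt_of_lt_of_le hc1 (hΦ.monotoneOn (mem_Ici.2 ?_) (mem_Ici.2 hx0.le) h.le)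
      exact le_trans ha.le hc2.le
  set K := (orliczM Φ u₀).toReal with hK
  have hKnn : 0 ≤ K := ENNReal.toReal_nonneg
  have hub : 0 < Φ (u₀ * b) := hposafter _ (lt_mul_of_one_lt_left hb0 hu₀)
  set ε := Φ (u₀ * b) / (2 * (K + 1)) with hε
  have hεpos : 0 < ε := by positivity
  have hcont : ContinuousWithinAt Φ (Ici 0) b := hΦ.continuousOn _ (mem_Ici.2 hb0.le)
  have hmono : 𝓝[>] b ≤ 𝓝[Ici 0] b :=
    nhdsWithin_mono b (fun x hx => le_of_lt (hb0.trans hx))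
  have hev : ∀ᶠ x in 𝓝[>] b, Φ x < ε := by
    have h1 : Tendsto Φ (𝓝[>] b) (𝓝 0) := by
      rw [← hΦb]
      exact hcont.tendsto.mono_left hmono
    exact h1.eventually_lt_const hεpos
  obtain ⟨x, hxε, hxb⟩ := (hev.and self_mem_nhdsWithin).exists
  have hxb : b < x := hxb
  have hΦx : 0 < Φ x := hposafter x hxb
  have hx0 : 0 < x := hb0.trans hxb
  have hle : Φ (u₀ * x) ≤ K * Φ x := by
    have h1 : ENNReal.ofReal (Φ (u₀ * x) / Φ x) ≤ orliczM Φ u₀ :=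
      le_biSup (fun s => ENNReal.ofReal (Φ (u₀ * s) / Φ s))
        (show x ∈ {s : ℝ | 0 < s ∧ 0 < Φ s} from ⟨hx0, hΦx⟩)
    rw [← ENNReal.ofReal_toReal hfin] at h1
    have h2 := (ENNReal.ofReal_le_ofReal_iff hKnn).1 h1
    rwa [div_le_iff₀ hΦx] at h2
  have hge : Φ (u₀ * b) ≤ Φ (u₀ * x) := by
    have hu0 : (0:ℝ) < u₀ := lt_trans one_pos hu₀
    exact hΦ.monotoneOn (mem_Ici.2 (by positivity)) (mem_Ici.2 (by positivity))
      (mul_le_mul_of_nonneg_left hxb.le hu0.le)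
  have hcontra : Φ (u₀ * b) < Φ (u₀ * b) := by
    calc Φ (u₀ * b) ≤ K * Φ x := le_trans hge hle
      _ ≤ K * ε := mul_le_mul_of_nonneg_left hxε.le hKnn
      _ < 2 * (K + 1) * ε := by nlinarith
      _ = Φ (u₀ * b) := by rw [hε]; field_simp
  exact lt_irrefl _ hcontra

lemma M_le_of_int (hΦ : IsOrliczFunction Φ) {q C : ℝ} (hq : 0 < q) (hC : 0 < C)
    (h : ∀ t : ℝ, 0 < t → (∫⁻ s in Set.Ioi t, ENNReal.ofReal (s ^ (-q) * Φ s / s))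
          ≤ ENNReal.ofReal (C * (t ^ (-q) * Φ t)))
    {u : ℝ} (hu : 1 ≤ u) : orliczM Φ u ≤ ENNReal.ofReal (C * q * u ^ q) := by
  refine iSup₂_le fun s hs => ?_
  obtain ⟨hs0, hΦs⟩ := hs
  have hu0 : 0 < u := lt_of_lt_of_le one_pos hu
  have hus : 0 < u * s := mul_pos hu0 hs0
  have hΦus : 0 ≤ Φ (u * s) := phi_nonneg hΦ hus.le
  have key : ENNReal.ofReal (Φ (u*s) * ((u*s) ^ (-q) / q)) ≤ ENNReal.ofReal (C * (s ^ (-q) * Φ s)) := by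
    calc ENNReal.ofReal (Φ (u*s) * ((u*s) ^ (-q) / q))
        = ENNReal.ofReal (Φ (u*s)) * ENNReal.ofReal ((u*s) ^ (-q) / q) := ENNReal.ofReal_mul hΦus
      _ = ENNReal.ofReal (Φ (u*s)) * ∫⁻ r in Ioi (u*s), ENNReal.ofReal (r ^ (-q-1)) := by
          rw [lint_rpow hus (by linarith)]
          norm_num
      _ = ∫⁻ r in Ioi (u*s), ENNReal.ofReal (Φ (u*s)) * ENNReal.ofReal (r ^ (-q-1)) :=
          (lintegral_const_mul' _ _ ENNReal.ofReal_ne_top).symm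
      _ ≤ ∫⁻ r in Ioi (u*s), ENNReal.ofReal (r ^ (-q) * Φ r / r) := by
          refine setLIntegral_mono' measurableSet_Ioi fun r hr => ?_
          rw [← ENNReal.ofReal_mul hΦus]
          apply ENNReal.ofReal_le_ofReal
          have hr0 : 0 < r := hus.trans hr
          have h1 : Φ (u*s) ≤ Φ r :=
            hΦ.monotoneOn (mem_Ici.2 hus.le) (mem_Ici.2 hr0.le) (le_of_lt hr)
          calc Φ (u*s) * r ^ (-q-1) ≤ Φ r * r ^ (-q-1) :=
                mul_le_mul_of_nonneg_right h1 (Real.rpow_nonneg hr0.le _)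
            _ = r ^ (-q) * Φ r / r := by
                rw [show (-q-1 : ℝ) = (-q) + (-1) by ring, Real.rpow_add hr0, Real.rpow_neg_one]
                field_simp
      _ ≤ ∫⁻ r in Ioi s, ENNReal.ofReal (r ^ (-q) * Φ r / r) :=
          lintegral_mono_set (Ioi_subset_Ioi (le_mul_of_one_le_left hs0.le hu))
      _ ≤ ENNReal.ofReal (C * (s ^ (-q) * Φ s)) := h s hs0
  have hRnn : 0 ≤ C * (s ^ (-q) * Φ s) := by positivity
  have key2 : Φ (u*s) * ((u*s) ^ (-q) / q) ≤ C * (s ^ (-q) * Φ s) :=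
    (ENNReal.ofReal_le_ofReal_iff hRnn).1 key
  apply ENNReal.ofReal_le_ofReal
  rw [div_le_iff₀ hΦs]
  have hP : (0:ℝ) < (u*s) ^ q := Real.rpow_pos_of_pos hus q
  have hS : (0:ℝ) < s ^ q := Real.rpow_pos_of_pos hs0 q
  have huq : (0:ℝ) < u ^ q := Real.rpow_pos_of_pos hu0 q
  have step := mul_le_mul_of_nonneg_right key2 (le_of_lt (mul_pos hq hP))
  calc Φ (u*s)
      = Φ (u*s) * ((u*s) ^ (-q) / q) * (q * (u*s) ^ q) := by
        rw [Real.rpow_neg hus.le]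
        field_simp
    _ ≤ C * (s ^ (-q) * Φ s) * (q * (u*s) ^ q) := step
    _ = C * q * u ^ q * Φ s := by
        rw [Real.mul_rpow hu0.le hs0.le, Real.rpow_neg hs0.le]
        field_simp

lemma dir1 (hΦ : IsOrliczFunction Φ) {qΦ : EReal}
    (hqΦ : Tendsto (orliczLogRatio Φ) atTop (𝓝 qΦ)) {q C : ℝ} (hq : 0 < q) (hC : 0 < C)
    (h : ∀ t : ℝ, 0 < t → (∫⁻ s in Set.Ioi t, ENNReal.ofReal (s ^ (-q) * Φ s / s))
          ≤ ENNReal.ofReal (C * (t ^ (-q) * Φ t))) :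
    qΦ ≤ (q : EReal) := by
  set g : ℝ → ℝ := fun u => Real.log (C * q) / Real.log u + q with hg
  have hgt : Tendsto (fun u => ((g u : ℝ) : EReal)) atTop (𝓝 (q : EReal)) := by
    rw [EReal.tendsto_coe]
    have : Tendsto g atTop (𝓝 (0 + q)) :=
      (tendsto_const_nhds.div_atTop Real.tendsto_log_atTop).add tendsto_const_nhds
    simpa using this
  refine le_of_tendsto_of_tendsto hqΦ hgt ?_
  filter_upwards [eventually_ge_atTop 2] with u hu2
  have hu1 : (1:ℝ) < u := by linarith
  have hlog : 0 < Real.log u := Real.log_pos hu1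
  rw [logRatio_eq, EReal.div_le_iff_le_mul (by exact_mod_cast hlog) (EReal.coe_ne_top _)]
  have hM := M_le_of_int hΦ hq hC h (le_trans one_le_two hu2)
  have hpos : 0 < C * q * u ^ q := by positivity
  calc ENNReal.log (orliczM Φ u) ≤ ENNReal.log (ENNReal.ofReal (C * q * u ^ q)) :=
        ENNReal.log_monotone hM
    _ = ((Real.log (C * q * u ^ q) : ℝ) : EReal) := ENNReal.log_ofReal_of_pos hpos
    _ = ((Real.log u * g u : ℝ) : EReal) := by
        rw [Real.log_mul (by positivity) (by positivity), Real.log_rpow (by linarith)]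
        congr 1
        simp only [hg]; field_simp
    _ = (Real.log u : EReal) * ((g u : ℝ) : EReal) := EReal.coe_mul _ _

lemma dir2 (hΦ : IsOrliczFunction Φ) {qΦ : EReal}
    (hqΦ : Tendsto (orliczLogRatio Φ) atTop (𝓝 qΦ)) {q : ℝ} (hlt : qΦ < (q : EReal)) :
    0 < q ∧ ∃ C : ℝ, 0 < C ∧ ∀ t : ℝ, 0 < t →
      (∫⁻ s in Set.Ioi t, ENNReal.ofReal (s ^ (-q) * Φ s / s))
        ≤ ENNReal.ofReal (C * (t ^ (-q) * Φ t)) := by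
  have h1q : (1 : EReal) ≤ qΦ := one_le_qPhi hΦ hqΦ
  obtain ⟨r, hr1, hr2⟩ := EReal.exists_between_coe_real hlt
  have h1r : (1:ℝ) < r := by exact_mod_cast lt_of_le_of_lt h1q hr1
  have hrq : r < q := by exact_mod_cast hr2
  have hq1 : (1:ℝ) < q := h1r.trans hrq
  have hev : ∀ᶠ u in atTop, orliczLogRatio Φ u < (r : EReal) :=
    hqΦ.eventually_lt_const hr1
  obtain ⟨u₁, hu₁⟩ := eventually_atTop.1 hev
  set u₀ : ℝ := max u₁ 2 with hu₀def
  have hu₀2 : (2:ℝ) ≤ u₀ := le_max_right _ _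
  have hu₀1 : (1:ℝ) < u₀ := by linarith
  have hMle : ∀ u, u₀ ≤ u → orliczM Φ u ≤ ENNReal.ofReal (u ^ r) := by
    intro u hu
    have hu2 : (2:ℝ) ≤ u := le_trans hu₀2 hu
    have hu1 : (1:ℝ) < u := by linarith
    have hlog : 0 < Real.log u := Real.log_pos hu1
    have h := le_of_lt (hu₁ u (le_trans (le_max_left _ _) hu))
    rw [logRatio_eq, EReal.div_le_iff_le_mul (by exact_mod_cast hlog) (EReal.coe_ne_top _)] at h
    rw [← ENNReal.log_le_log_iff]
    calc ENNReal.log (orliczM Φ u) ≤ (Real.log u : EReal) * (r : EReal) := h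
      _ = ((Real.log (u ^ r) : ℝ) : EReal) := by
          rw [Real.log_rpow (by linarith), ← EReal.coe_mul, mul_comm]
      _ = ENNReal.log (ENNReal.ofReal (u ^ r)) :=
          (ENNReal.log_ofReal_of_pos (Real.rpow_pos_of_pos (by linarith) r)).symm
  have hfin : orliczM Φ u₀ ≠ ⊤ :=
    ne_top_of_le_ne_top ENNReal.ofReal_ne_top (hMle u₀ le_rfl)
  have hpos : ∀ a : ℝ, 0 < a → 0 < Φ a := fun a ha => phi_pos hΦ hu₀1 hfin ha
  set K := (orliczM Φ u₀).toReal with hKdef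
  have hK1 : (1:ℝ) ≤ K := by
    have h1 := M_ge hΦ (le_of_lt hu₀1)
    have h2 := ENNReal.toReal_mono hfin h1
    rw [ENNReal.toReal_ofReal (by linarith)] at h2
    linarith
  have hpt : ∀ t : ℝ, 0 < t → ∀ s : ℝ, t ≤ s → Φ s ≤ K * (s/t) ^ r * Φ t := by
    intro t ht s hts
    have hΦt : 0 < Φ t := hpos t ht
    have hv1 : 1 ≤ s / t := (one_le_div ht).2 hts
    have hv0 : 0 < s / t := lt_of_lt_of_le one_pos hv1
    have hst : (s/t) * t = s := div_mul_cancel₀ _ ht.ne'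
    have hmem : t ∈ {s : ℝ | 0 < s ∧ 0 < Φ s} := ⟨ht, hΦt⟩
    have hvr1 : 1 ≤ (s/t) ^ r := by
      calc (1:ℝ) = (s/t) ^ (0:ℝ) := (Real.rpow_zero _).symm
        _ ≤ (s/t) ^ r := Real.rpow_le_rpow_of_exponent_le hv1 (by linarith)
    have hbase : ENNReal.ofReal (Φ ((s/t) * t) / Φ t) ≤ orliczM Φ (s/t) :=
      le_biSup (fun x => ENNReal.ofReal (Φ ((s/t) * x) / Φ x)) hmem
    rcases le_or_gt u₀ (s/t) with hcase | hcase
    · have h2 := le_trans hbase (hMle _ hcase)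
      have h3 := (ENNReal.ofReal_le_ofReal_iff (Real.rpow_nonneg hv0.le _)).1 h2
      rw [div_le_iff₀ hΦt] at h3
      rw [hst] at h3
      nlinarith [mul_nonneg (sub_nonneg.2 hK1) (mul_nonneg (Real.rpow_nonneg hv0.le r) hΦt.le)]
    · have h2 := le_trans hbase (M_mono hΦ hv0.le hcase.le)
      rw [← ENNReal.ofReal_toReal hfin] at h2
      have h3 := (ENNReal.ofReal_le_ofReal_iff (by linarith)).1 h2
      rw [div_le_iff₀ hΦt] at h3
      rw [hst] at h3
      rw [← hKdef] at h3
      nlinarith [mul_nonneg (mul_nonneg (sub_nonneg.2 hvr1) (by linarith : (0:ℝ) ≤ K)) hΦt.le]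
  refine ⟨by linarith, K / (q - r), div_pos (by linarith) (by linarith), ?_⟩
  intro t ht
  have hΦt : 0 < Φ t := hpos t ht
  have hcnn : 0 ≤ K * t ^ (-r) * Φ t :=
    mul_nonneg (mul_nonneg (by linarith) (Real.rpow_nonneg ht.le _)) hΦt.le
  calc (∫⁻ s in Set.Ioi t, ENNReal.ofReal (s ^ (-q) * Φ s / s))
      ≤ ∫⁻ s in Set.Ioi t, ENNReal.ofReal ((K * t ^ (-r) * Φ t) * s ^ (r - q - 1)) := by
        refine setLIntegral_mono' measurableSet_Ioi fun s hs => ?_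
        apply ENNReal.ofReal_le_ofReal
        have hs0 : 0 < s := ht.trans hs
        have h1 := hpt t ht s (le_of_lt hs)
        have e1 : s ^ (-q) * Φ s / s = Φ s * s ^ (-q - 1) := by
          rw [show (-q - 1 : ℝ) = -q + (-1) by ring, Real.rpow_add hs0, Real.rpow_neg_one]
          field_simp
        have e2 : (s/t) ^ r = s ^ r * t ^ (-r) := by
          rw [Real.div_rpow hs0.le ht.le, Real.rpow_neg ht.le, div_eq_mul_inv]
        calc s ^ (-q) * Φ s / s = Φ s * s ^ (-q-1) := e1
          _ ≤ (K * (s/t) ^ r * Φ t) * s ^ (-q-1) :=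
              mul_le_mul_of_nonneg_right h1 (Real.rpow_nonneg hs0.le _)
          _ = (K * t ^ (-r) * Φ t) * (s ^ r * s ^ (-q-1)) := by rw [e2]; ring
          _ = (K * t ^ (-r) * Φ t) * s ^ (r - q - 1) := by
              rw [← Real.rpow_add hs0]
              ring_nf
    _ = ENNReal.ofReal (K * t ^ (-r) * Φ t) * ∫⁻ s in Set.Ioi t, ENNReal.ofReal (s ^ (r - q - 1)) := by
        rw [← lintegral_const_mul' _ _ ENNReal.ofReal_ne_top]
        congr 1
        funext s
        rw [← ENNReal.ofReal_mul hcnn]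
    _ = ENNReal.ofReal (K * t ^ (-r) * Φ t) * ENNReal.ofReal (t ^ (r - q) / (q - r)) := by
        rw [lint_rpow ht (by linarith)]
        norm_num
    _ = ENNReal.ofReal (K / (q - r) * (t ^ (-q) * Φ t)) := by
        rw [← ENNReal.ofReal_mul hcnn]
        congr 1
        rw [show (-q : ℝ) = (-r) + (r - q) by ring, Real.rpow_add ht]
        have hqr : q - r ≠ 0 := by linarith
        field_simp

end OrliczAux

/-- characterization of the upper index `q_Φ` of an Orlicz function:
`q_Φ = inf { q > 0 : ∃ C > 0, ∫ₜ^∞ s^{-q} Φ(s) ds/s ≤ C t^{-q} Φ(t) for all t > 0 }`,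
with the convention `inf ∅ = ∞`. -/
theorem orlicz_upper_index_characterization (Φ : ℝ → ℝ) (hΦ : IsOrliczFunction Φ)
    (qΦ : EReal) (hqΦ : Tendsto (orliczLogRatio Φ) atTop (𝓝 qΦ)) :
    qΦ = sInf ((fun q : ℝ => (q : EReal)) ''
        {q : ℝ | 0 < q ∧ ∃ C : ℝ, 0 < C ∧ ∀ t : ℝ, 0 < t →
          (∫⁻ s in Set.Ioi t, ENNReal.ofReal (s ^ (-q) * Φ s / s))
            ≤ ENNReal.ofReal (C * (t ^ (-q) * Φ t))}) := by
  apply le_antisymm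
  · refine le_sInf fun x hx => ?_
    obtain ⟨q, ⟨hq, C, hC, h⟩, rfl⟩ := hx
    exact OrliczAux.dir1 hΦ hqΦ hq hC h
  · by_contra hcon
    rw [not_le] at hcon
    obtain ⟨x, hx1, hx2⟩ := EReal.exists_between_coe_real hcon
    obtain ⟨hq, C, hC, h⟩ := OrliczAux.dir2 hΦ hqΦ hx1
    have hle : sInf ((fun q : ℝ => (q : EReal)) ''
        {q : ℝ | 0 < q ∧ ∃ C : ℝ, 0 < C ∧ ∀ t : ℝ, 0 < t →
          (∫⁻ s in Set.Ioi t, ENNReal.ofReal (s ^ (-q) * Φ s / s))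
            ≤ ENNReal.ofReal (C * (t ^ (-q) * Φ t))}) ≤ ((x:ℝ) : EReal) :=
      sInf_le ⟨x, ⟨hq, C, hC, h⟩, rfl⟩
    exact absurd hle (not_le.2 hx2)
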